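/- Let $u : [0,\infty) \to H$ be a $C^1$ solution of $u' + Lu + Pu = 0$ in a Hilbert space $H$, where $L$ is a (possibly unbounded) skew-adjoint operator and $P$ is bounded with operator norm $\le K$ and $\langle Pv, v\rangle \ge 0$. Assume $\partial_t u$ also solves the same equation. Then for all $t \ge 0$: $\|Lu(t)\| \le \|Lu(0)\| + 2K\|u(0)\|$. -/

import Mathlib

open scoped RealInnerProductSpace

lemma contraction_aux {E : Type*} [NormedAddCommGroup E] [InnerProductSpace ℝ E]
    (L : E →ₗ[ℝ] E)
    (hL : ∀ v w : E, (inner ℝ (L v) w : ℝ) = -(inner ℝ v (L w) : ℝ))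
    (P : E →L[ℝ] E)
    (hP : ∀ v : E, (0:ℝ) ≤ (inner ℝ (P v) v : ℝ))
    (v v' : ℝ → E)
    (hv : ∀ t : ℝ, HasDerivAt v (v' t) t)
    (heqv : ∀ t : ℝ, v' t = -(L (v t)) - P (v t)) :
    ∀ t : ℝ, 0 ≤ t → ‖v t‖ ≤ ‖v 0‖ := by
  intro t ht
  set g : ℝ → ℝ := fun s => ⟪v s, v s⟫
  have hg : ∀ s : ℝ, HasDerivAt g (⟪v s, v' s⟫ + ⟪v' s, v s⟫) s := by
    intro s
    exact (hv s).inner ℝ (hv s)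
  have hder : ∀ s : ℝ, deriv g s ≤ 0 := by
    intro s
    rw [(hg s).deriv]
    have hLv : (⟪L (v s), v s⟫ : ℝ) = 0 := by
      have h1 := hL (v s) (v s)
      have h2 : (⟪v s, L (v s)⟫ : ℝ) = ⟪L (v s), v s⟫ := real_inner_comm _ _
      linarith [h1, h2.symm ▸ h1]
    have hPv := hP (v s)
    rw [heqv s]
    have e1 : (⟪v s, -(L (v s)) - P (v s)⟫ : ℝ) = -⟪v s, L (v s)⟫ - ⟪v s, P (v s)⟫ := by
      rw [inner_sub_right, inner_neg_right]
    have e2 : (⟪-(L (v s)) - P (v s), v s⟫ : ℝ) = -⟪L (v s), v s⟫ - ⟪P (v s), v s⟫ := by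
      rw [inner_sub_left, inner_neg_left]
    have h2 : (⟪v s, L (v s)⟫ : ℝ) = ⟪L (v s), v s⟫ := real_inner_comm _ _
    have h3 : (⟪v s, P (v s)⟫ : ℝ) = ⟪P (v s), v s⟫ := real_inner_comm _ _
    rw [e1, e2, h2, h3, hLv]
    linarith
  have hanti : AntitoneOn g (Set.Ici (0:ℝ)) := by
    apply antitoneOn_of_deriv_nonpos (convex_Ici 0)
    · exact fun s _ => ((hg s).continuousAt).continuousWithinAt
    · intro s _
      exact ((hg s).differentiableAt).differentiableWithinAt
    · intro s _
      exact hder s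
  have hle : g t ≤ g 0 := hanti (Set.self_mem_Ici) ht ht
  have hg0 : g 0 = ‖v 0‖ ^ 2 := real_inner_self_eq_norm_sq _
  have hgt : g t = ‖v t‖ ^ 2 := real_inner_self_eq_norm_sq _
  rw [hg0, hgt] at hle
  nlinarith [norm_nonneg (v t), norm_nonneg (v 0)]

/-- Uniform-in-time higher-order estimate obtained by commuting `∂ₜ` with the
damped equation `u' + Lu + Pu = 0`. -/
theorem stmt10 {E : Type*} [NormedAddCommGroup E] [InnerProductSpace ℝ E]
    (L : E →ₗ[ℝ] E)
    (hL : ∀ v w : E, (inner ℝ (L v) w : ℝ) = -(inner ℝ v (L w) : ℝ))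
    (P : E →L[ℝ] E) (K : ℝ) (hPK : ‖P‖ ≤ K)
    (hP : ∀ v : E, (0:ℝ) ≤ (inner ℝ (P v) v : ℝ))
    (u u' : ℝ → E)
    (hu : ∀ t : ℝ, HasDerivAt u (u' t) t)
    (heq : ∀ t : ℝ, u' t = -(L (u t)) - P (u t))
    (heq' : ∀ t : ℝ, HasDerivAt u' (-(L (u' t)) - P (u' t)) t) :
    ∀ t : ℝ, 0 ≤ t → ‖L (u t)‖ ≤ ‖L (u 0)‖ + 2 * K * ‖u 0‖ := by
  intro t ht
  have hK : 0 ≤ K := le_trans (norm_nonneg P) hPK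
  have hu_le : ‖u t‖ ≤ ‖u 0‖ := contraction_aux L hL P hP u u' hu heq t ht
  have hu'_le : ‖u' t‖ ≤ ‖u' 0‖ :=
    contraction_aux L hL P hP u' (fun s => -(L (u' s)) - P (u' s)) heq' (fun _ => rfl) t ht
  have hPbound : ∀ w : E, ‖P w‖ ≤ K * ‖w‖ := fun w =>
    le_trans (P.le_opNorm w) (mul_le_mul_of_nonneg_right hPK (norm_nonneg _))
  -- L (u t) = -u' t - P (u t)
  have hLu : ∀ s : ℝ, L (u s) = -u' s - P (u s) := by
    intro s; rw [heq s]; abel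
  calc ‖L (u t)‖ = ‖-u' t - P (u t)‖ := by rw [hLu t]
    _ ≤ ‖u' t‖ + ‖P (u t)‖ := by
        calc ‖-u' t - P (u t)‖ ≤ ‖-u' t‖ + ‖P (u t)‖ := norm_sub_le _ _
          _ = ‖u' t‖ + ‖P (u t)‖ := by rw [norm_neg]
    _ ≤ ‖u' 0‖ + K * ‖u t‖ := add_le_add hu'_le (hPbound _)
    _ ≤ ‖u' 0‖ + K * ‖u 0‖ := by
        have := mul_le_mul_of_nonneg_left hu_le hK; linarith
    _ ≤ (‖L (u 0)‖ + K * ‖u 0‖) + K * ‖u 0‖ := by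
        have : ‖u' 0‖ ≤ ‖L (u 0)‖ + K * ‖u 0‖ := by
          rw [heq 0]
          calc ‖-(L (u 0)) - P (u 0)‖ ≤ ‖-(L (u 0))‖ + ‖P (u 0)‖ := norm_sub_le _ _
            _ = ‖L (u 0)‖ + ‖P (u 0)‖ := by rw [norm_neg]
            _ ≤ ‖L (u 0)‖ + K * ‖u 0‖ := by linarith [hPbound (u 0)]
        linarith
    _ = ‖L (u 0)‖ + 2 * K * ‖u 0‖ := by ring
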